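/- Let u : ℝⁿ → ℝᵐ be a continuous, nonconstant map, let x₁ ≠ x₂ be points with u(x₁) = u(x₂) = 0, and suppose there are real numbers α₁, α₂ > 0 such that for each i ∈ {1,2}, all z ∈ ℝⁿ and all λ > 0 one has u(xᵢ + λz) = λ^{αᵢ} u(xᵢ + z). Then α₁ = α₂ and u is invariant under translation in the direction x₁ − x₂, i.e. u(y + t(x₁ − x₂)) = u(y) for all y ∈ ℝⁿ and t ∈ ℝ. -/

import Mathlib

/-- Two-point homogeneity: if a continuous nonconstant map `u : ℝⁿ → ℝᵐ` is homogeneous of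
degree `α₁ > 0` about `x₁` and of degree `α₂ > 0` about `x₂` with `x₁ ≠ x₂`, then `α₁ = α₂`
and `u` is invariant under translations in the direction `x₁ - x₂`. -/
theorem two_point_homogeneity {n m : ℕ} (u : (Fin n → ℝ) → (Fin m → ℝ))
    (hcont : Continuous u) (hnc : ∃ a b, u a ≠ u b)
    (x₁ x₂ : Fin n → ℝ) (hne : x₁ ≠ x₂)
    (α₁ α₂ : ℝ) (hα₁ : 0 < α₁) (hα₂ : 0 < α₂)
    (hu₁ : u x₁ = 0) (hu₂ : u x₂ = 0)
    (hhom₁ : ∀ (z : Fin n → ℝ) (l : ℝ), 0 < l → u (x₁ + l • z) = l ^ α₁ • u (x₁ + z))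
    (hhom₂ : ∀ (z : Fin n → ℝ) (l : ℝ), 0 < l → u (x₂ + l • z) = l ^ α₂ • u (x₂ + z)) :
    α₁ = α₂ ∧ ∀ (y : Fin n → ℝ) (t : ℝ), u (y + t • (x₁ - x₂)) = u y := by
  obtain ⟨a, b, hab⟩ := hnc
  set e := x₁ - x₂ with he
  -- Key relation: translating by (μ-1)•e multiplies u by μ^(α₂-α₁)
  have key : ∀ (x : Fin n → ℝ) (μ : ℝ), 0 < μ →
      u (x + (μ - 1) • e) = (μ ^ (α₂ - α₁)) • u x := by
    intro x μ hμ
    have hμ' : (0:ℝ) < μ⁻¹ := inv_pos.mpr hμ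
    have h1 : u (x₁ + μ⁻¹ • (x - x₁)) = μ⁻¹ ^ α₁ • u x := by
      have := hhom₁ (x - x₁) μ⁻¹ hμ'
      simpa using this
    have h2 := hhom₂ (x₁ + μ⁻¹ • (x - x₁) - x₂) μ hμ
    have heq : x₂ + μ • (x₁ + μ⁻¹ • (x - x₁) - x₂) = x + (μ - 1) • e := by
      rw [he]
      match_scalars <;> field_simp <;> ring
    have heq2 : x₂ + (x₁ + μ⁻¹ • (x - x₁) - x₂) = x₁ + μ⁻¹ • (x - x₁) := by
      abel
    rw [heq, heq2, h1, smul_smul] at h2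
    rw [h2]
    congr 1
    rw [Real.inv_rpow hμ.le, ← Real.rpow_neg hμ.le, ← Real.rpow_add hμ, ← sub_eq_add_neg]
  -- A point where u is nonzero
  have hx0 : ∃ x0, u x0 ≠ 0 := by
    by_contra h
    push_neg at h
    exact hab (by rw [h a, h b])
  obtain ⟨x0, hx0⟩ := hx0
  set β := α₂ - α₁ with hβ
  have k2 : u (x0 + e) = ((2:ℝ) ^ β) • u x0 := by
    have := key x0 2 two_pos
    norm_num at this
    exact this
  have k3 : u (x0 + (2:ℝ) • e) = ((3:ℝ) ^ β) • u x0 := by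
    have := key x0 3 (by norm_num)
    norm_num at this
    exact this
  have k4 : u (x0 + (2:ℝ) • e) = ((4:ℝ) ^ β) • u x0 := by
    have h' := key (x0 + e) 2 two_pos
    norm_num at h'
    rw [k2, smul_smul] at h'
    have harg : x0 + e + e = x0 + (2:ℝ) • e := by
      match_scalars <;> ring
    rw [harg] at h'
    rw [h']
    congr 1
    rw [← Real.mul_rpow (by norm_num) (by norm_num)]
    norm_num
  have hβ0 : β = 0 := by
    obtain ⟨i, hi⟩ := Function.ne_iff.mp hx0
    have : (3:ℝ) ^ β * u x0 i = (4:ℝ) ^ β * u x0 i := by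
      have := k3.symm.trans k4
      have := congrFun this i
      simpa using this
    have h34 : (3:ℝ) ^ β = (4:ℝ) ^ β := by
      rw [mul_eq_mul_right_iff] at this
      rcases this with h | h
      · exact h
      · exact absurd h (by simpa using hi)
    have hlog := congrArg Real.log h34
    rw [Real.log_rpow (by norm_num), Real.log_rpow (by norm_num)] at hlog
    have hne34 : Real.log 3 ≠ Real.log 4 :=
      ne_of_lt (Real.log_lt_log (by norm_num) (by norm_num))
    by_contra hb
    exact hne34 (mul_left_cancel₀ hb hlog)
  have halpha : α₁ = α₂ := by
    have : α₂ - α₁ = 0 := hβ0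
    linarith
  refine ⟨halpha, ?_⟩
  -- with β = 0 the key relation is translation invariance for μ > 0
  have key' : ∀ (x : Fin n → ℝ) (s : ℝ), -1 < s → u (x + s • e) = u x := by
    intro x s hs
    have := key x (s + 1) (by linarith)
    rw [hβ0] at this
    simpa [Real.rpow_zero] using this
  intro y t
  rcases lt_or_ge (-1 : ℝ) t with h | h
  · exact key' y t h
  · have h1 : u ((y + t • e) + (-t) • e) = u (y + t • e) :=
      key' (y + t • e) (-t) (by linarith)
    have harg : (y + t • e) + (-t) • e = y := by
      match_scalars <;> ring
    rw [harg] at h1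
    exact h1.symm
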